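/- For functions f : B^J → A^I and g : C^H → B^J, the communication complex of f ∘ g is contained in f_*(K_g), i.e., every simplex of K_{f∘g} is contained in a set of the form ⋃_{j ∈ S} W^f(j) for some simplex S ∈ K_g. -/

import Mathlib

/-- `W` determines output coordinate `i` of `f`: the value `f x i` only
depends on the restriction of `x` to `W`. -/
def Determines {B J A I : Type*} (f : (J → B) → (I → A)) (i : I) (W : Set J) : Prop :=
  ∀ x y : J → B, (∀ j ∈ W, x j = y j) → f x i = f y i

/-- The input window of output coordinate `i`: the intersection of all
determining sets (which, for finite data, is the smallest determining set). -/
def window {B J A I : Type*} (f : (J → B) → (I → A)) (i : I) : Set J :=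
  ⋂₀ {W : Set J | Determines f i W}

/-- The dual window of an input coordinate `j`. -/
def dualWindow {B J A I : Type*} (f : (J → B) → (I → A)) (j : J) : Set I :=
  {i : I | j ∈ window f i}

/-- The communication complex of `f`: `S ∈ K_f` iff `⋂_{i ∈ S} W_f(i) ≠ ∅`
(the empty intersection being all of `J`). -/
def commComplex {B J A I : Type*} (f : (J → B) → (I → A)) : Set (Set I) :=
  {S : Set I | (⋂ i ∈ S, window f i).Nonempty}

/-- A complex `K` over `I` generates the language `L ⊆ A^I` if some function
`f : B^J → A^I` (with `B, J` finite, `J` nonempty) has image `L` and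
communication complex contained in `K`. -/
def Generates {A I : Type*} (K : Set (Set I)) (L : Set (I → A)) : Prop :=
  ∃ (B J : Type) (_ : Finite B) (_ : Finite J) (_ : Nonempty J)
    (f : (J → B) → (I → A)), Set.range f = L ∧ commComplex f ⊆ K

/-- A complex is connected if no nontrivial partition of the vertex set splits
all of its simplices. -/
def ConnectedComplex {I : Type*} (K : Set (Set I)) : Prop :=
  ¬ ∃ I0 : Set I, I0 ≠ ∅ ∧ I0 ≠ Set.univ ∧ ∀ S ∈ K, S ⊆ I0 ∨ S ⊆ I0ᶜ

/-- A simplicial complex: a downward closed collection of subsets. -/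
def IsComplex {I : Type*} (K : Set (Set I)) : Prop :=
  ∀ S ∈ K, ∀ T ⊆ S, T ∈ K

/-- The 1-skeleton of a complex, as a simple graph. -/
def skeletonGraph {I : Type*} (K : Set (Set I)) : SimpleGraph I :=
  SimpleGraph.fromRel (fun i j => ({i, j} : Set I) ∈ K)

/-- The complex associated to a graph: the empty set, the singletons, and the
edges. -/
def treeComplex {I : Type*} (G : SimpleGraph I) : Set (Set I) :=
  {S | S = ∅ ∨ (∃ i, S = {i}) ∨ ∃ i j, G.Adj i j ∧ S = ({i, j} : Set I)}

/-- The maximal simplices of a complex. -/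
def maxSimplices {I : Type*} (K : Set (Set I)) : Set (Set I) :=
  {S | S ∈ K ∧ ∀ T ∈ K, S ⊆ T → S = T}

/-- The image `f_*(K)` of a complex `K` on the input coordinates of `f`:
generated by the unions of dual windows over simplices of `K`. -/
def pushComplex {B J A I : Type*} (f : (J → B) → (I → A)) (K : Set (Set J)) : Set (Set I) :=
  {T : Set I | ∃ S ∈ K, T ⊆ ⋃ j ∈ S, dualWindow f j}


lemma det_inter {B J A I : Type*} {f : (J → B) → (I → A)} {i : I} {W1 W2 : Set J}
    (h1 : Determines f i W1) (h2 : Determines f i W2) : Determines f i (W1 ∩ W2) := by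
  classical
  intro x y hxy
  set z : J → B := fun j => if j ∈ W1 then x j else y j with hz
  have hxz : f x i = f z i := h1 x z (fun j hj => by simp [hz, hj])
  have hzy : f z i = f y i := h2 z y (fun j hj => by
    by_cases h : j ∈ W1
    · simpa [hz, h] using hxy j ⟨h, hj⟩
    · simp [hz, h])
  rw [hxz, hzy]

lemma det_sInter {B J A I : Type*} {f : (J → B) → (I → A)} {i : I} {F : Set (Set J)}
    (hF : F.Finite) (h : ∀ W ∈ F, Determines f i W) : Determines f i (⋂₀ F) := by
  refine Set.Finite.induction_on
    (motive := fun F _ => (∀ W ∈ F, Determines f i W) → Determines f i (⋂₀ F))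
    F hF ?_ ?_ h
  · intro _
    simp only [Set.sInter_empty]
    intro x y hxy
    have : x = y := funext fun j => hxy j (Set.mem_univ j)
    rw [this]
  · intro W F _ _ ih h'
    rw [Set.sInter_insert]
    exact det_inter (h' W (Set.mem_insert _ _))
      (ih (fun V hV => h' V (Set.mem_insert_of_mem _ hV)))

lemma det_window {B J A I : Type*} [Finite J] (f : (J → B) → (I → A)) (i : I) :
    Determines f i (window f i) :=
  det_sInter (Set.toFinite _) (fun _ hW => hW)

/-- the communication complex of `f ∘ g` is contained in the
pushforward `f_*(K_g)`. -/
theorem stmt5 {A B C I J H : Type*} [Finite A] [Finite B] [Finite C]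
    [Finite I] [Finite J] [Finite H] [Nonempty H]
    (f : (J → B) → (I → A)) (g : (H → C) → (J → B)) :
    commComplex (f ∘ g) ⊆ pushComplex f (commComplex g) := by
  intro S hS
  obtain ⟨h, hh⟩ := hS
  simp only [Set.mem_iInter] at hh
  refine ⟨{j | h ∈ window g j}, ⟨h, ?_⟩, ?_⟩
  · simp only [Set.mem_iInter]
    intro j hj
    exact hj
  · intro i hi
    by_contra hcon
    simp only [Set.mem_iUnion, not_exists] at hcon
    -- so for every j ∈ window f i, h ∉ window g j
    have key : ∀ j ∈ window f i, h ∉ window g j := by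
      intro j hji hhj
      exact hcon j hhj hji
    set W : Set H := ⋃ j ∈ window f i, window g j with hW
    have hdet : Determines (f ∘ g) i W := by
      intro x y hxy
      have hg : ∀ j ∈ window f i, g x j = g y j := by
        intro j hj
        exact det_window g j x y (fun k hk =>
          hxy k (Set.mem_biUnion hj hk))
      exact det_window f i (g x) (g y) hg
    have hhW : h ∈ W := hh i hi W hdet
    obtain ⟨j, hj, hhj⟩ := Set.mem_iUnion₂.mp hhW
    exact key j hj hhj
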